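/- Let τ and X be n×n complex matrices such that τ is positive semidefinite with tr(τ) ≤ 1, and 0 ≤ X ≤ 1 (meaning both X and 1 − X are positive semidefinite), and let ε ∈ (0,1). If tr(τX) ≥ 1 − ε, then ‖√X · τ · √X − τ‖₁ ≤ 2√ε, where √X denotes the positive semidefinite square root of X. -/

import Mathlib

open ComplexOrder

/-- The positive semidefinite square root of a positive semidefinite matrix
(the definition removed from Mathlib, restored verbatim). -/
noncomputable def Matrix.PosSemidef.sqrt {n 𝕜 : Type*} [Fintype n] [RCLike 𝕜] [DecidableEq n]
    {A : Matrix n n 𝕜} (hA : A.PosSemidef) : Matrix n n 𝕜 :=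
  hA.1.eigenvectorUnitary.1 * Matrix.diagonal ((↑) ∘ (√·) ∘ hA.1.eigenvalues) *
  (star hA.1.eigenvectorUnitary : Matrix n n 𝕜)

/-- The trace norm `‖M‖₁ = tr √(MᴴM)` of a complex square matrix. -/
noncomputable def traceNorm {n : ℕ} (M : Matrix (Fin n) (Fin n) ℂ) : ℝ :=
  ((Matrix.posSemidef_conjTranspose_mul_self M).sqrt).trace.re

namespace GentleAux
open Matrix

open scoped MatrixOrder in
lemma sqrt_eq_cfcSqrt {n : ℕ} {A : Matrix (Fin n) (Fin n) ℂ} (hA : A.PosSemidef) :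
    hA.sqrt = CFC.sqrt A := by
  rw [CFC.sqrt_eq_cfc, cfc_nnreal_eq_real _ A hA.nonneg, hA.1.cfc_eq]
  simp only [Matrix.IsHermitian.cfc, Matrix.PosSemidef.sqrt, Unitary.conjStarAlgAut_apply]
  congr 2
  funext i
  ext j
  simp [diagonal_apply, max_eq_left (hA.eigenvalues_nonneg i)]

end GentleAux

open scoped MatrixOrder in
lemma Matrix.PosSemidef.posSemidef_sqrt {n : ℕ} {A : Matrix (Fin n) (Fin n) ℂ}
    (hA : A.PosSemidef) : hA.sqrt.PosSemidef := by
  rw [GentleAux.sqrt_eq_cfcSqrt]; exact Matrix.nonneg_iff_posSemidef.mp (CFC.sqrt_nonneg A)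

open scoped MatrixOrder in
lemma Matrix.PosSemidef.sqrt_mul_self {n : ℕ} {A : Matrix (Fin n) (Fin n) ℂ}
    (hA : A.PosSemidef) : hA.sqrt * hA.sqrt = A := by
  rw [GentleAux.sqrt_eq_cfcSqrt]; exact CFC.sqrt_mul_sqrt_self A hA.nonneg

open scoped MatrixOrder in
lemma Matrix.PosSemidef.eq_sqrt_of_sq_eq {n : ℕ} {A : Matrix (Fin n) (Fin n) ℂ}
    (hA : A.PosSemidef) (B : Matrix (Fin n) (Fin n) ℂ) (hAB : A ^ 2 = B) {hB : B.PosSemidef} :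
    A = hB.sqrt := by
  rw [GentleAux.sqrt_eq_cfcSqrt]
  exact (CFC.sqrt_unique (by rw [← pow_two]; exact hAB) hA.nonneg).symm

namespace GentleAux
open Matrix

lemma psd_trace_re_nonneg {n : ℕ} {A : Matrix (Fin n) (Fin n) ℂ} (hA : A.PosSemidef) :
    0 ≤ A.trace.re := by
  have h : ∀ i, 0 ≤ A i i := fun i => by
    simpa [dotProduct, Pi.single_apply] using hA.dotProduct_mulVec_nonneg (Pi.single i 1)
  have : (0:ℂ) ≤ A.trace := Finset.sum_nonneg fun i _ => h i
  exact (Complex.le_def.mp this).1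

lemma trace_mul_re_nonneg {n : ℕ} {A B : Matrix (Fin n) (Fin n) ℂ}
    (hA : A.PosSemidef) (hB : B.PosSemidef) : 0 ≤ (A * B).trace.re := by
  have h1 : A * B = hA.sqrt * (hA.sqrt * B) := by
    rw [← mul_assoc, hA.sqrt_mul_self]
  have h2 : (A * B).trace = (hA.sqrt * B * hA.sqrt).trace := by
    rw [h1, trace_mul_comm, mul_assoc]
  have h3 : (hA.sqrt * B * hA.sqrt).PosSemidef := by
    have := hB.mul_mul_conjTranspose_same hA.sqrt
    rwa [hA.posSemidef_sqrt.1.eq] at this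
  rw [h2]; exact psd_trace_re_nonneg h3

lemma trace_cs {n : ℕ} (A B : Matrix (Fin n) (Fin n) ℂ) :
    ‖(Aᴴ * B).trace‖ ≤
      Real.sqrt ((Aᴴ * A).trace.re) * Real.sqrt ((Bᴴ * B).trace.re) := by
  classical
  let f : Matrix (Fin n) (Fin n) ℂ → EuclideanSpace ℂ (Fin n × Fin n) :=
    fun M => WithLp.toLp 2 (fun p : Fin n × Fin n => M p.1 p.2)
  have hin : ∀ M N : Matrix (Fin n) (Fin n) ℂ,
      (inner ℂ (f M) (f N) : ℂ) = (Mᴴ * N).trace := by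
    intro M N
    rw [PiLp.inner_apply]
    have h1 : (Mᴴ * N).trace = ∑ j, ∑ k, (starRingEnd ℂ) (M k j) * N k j := by
      simp [trace, diag, mul_apply, conjTranspose_apply]
    rw [h1, Finset.sum_comm]
    rw [Fintype.sum_prod_type]
    simp [RCLike.inner_apply, f]
    exact Finset.sum_congr rfl fun _ _ => Finset.sum_congr rfl fun _ _ => mul_comm _ _
  have key := norm_inner_le_norm (𝕜 := ℂ) (f A) (f B)
  rw [hin] at key
  have hnA : ‖f A‖ = Real.sqrt ((Aᴴ * A).trace.re) := by
    rw [norm_eq_sqrt_re_inner (𝕜 := ℂ), hin]; rfl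
  have hnB : ‖f B‖ = Real.sqrt ((Bᴴ * B).trace.re) := by
    rw [norm_eq_sqrt_re_inner (𝕜 := ℂ), hin]; rfl
  rw [hnA, hnB] at key
  exact key

lemma sandwich_mul {n : ℕ} {U : Matrix (Fin n) (Fin n) ℂ} (hU : star U * U = 1)
    (d e : Fin n → ℂ) :
    (U * diagonal d * star U) * (U * diagonal e * star U)
      = U * diagonal (fun i => d i * e i) * star U := by
  have h : (U * diagonal d * star U) * (U * diagonal e * star U)
      = U * (diagonal d * ((star U * U) * (diagonal e * star U))) := by
    simp only [mul_assoc]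
  rw [h, hU, one_mul]
  simp only [← mul_assoc]
  rw [mul_assoc U, diagonal_mul_diagonal]

lemma exists_sign {n : ℕ} (M : Matrix (Fin n) (Fin n) ℂ) (hM : M.IsHermitian) :
    ∃ C : Matrix (Fin n) (Fin n) ℂ, C.IsHermitian ∧ C * C = 1 ∧
      (C * M).trace.re = traceNorm M := by
  classical
  set U : Matrix (Fin n) (Fin n) ℂ := (hM.eigenvectorUnitary : Matrix (Fin n) (Fin n) ℂ) with hUdef
  have hUU : U * star U = 1 := (Matrix.mem_unitaryGroup_iff).mp hM.eigenvectorUnitary.2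
  have hUU' : star U * U = 1 := (Matrix.mem_unitaryGroup_iff').mp hM.eigenvectorUnitary.2
  set lam : Fin n → ℝ := hM.eigenvalues with hlam
  set s : Fin n → ℝ := fun i => if lam i < 0 then (-1 : ℝ) else 1 with hs
  set C : Matrix (Fin n) (Fin n) ℂ := U * diagonal (fun i => ((s i : ℝ) : ℂ)) * star U with hC
  set T : Matrix (Fin n) (Fin n) ℂ := U * diagonal (fun i => ((|lam i| : ℝ) : ℂ)) * star U with hT
  have hspec : M = U * diagonal (fun i => ((lam i : ℝ) : ℂ)) * star U := by
    have := hM.spectral_theorem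
    rw [this, Unitary.conjStarAlgAut_apply]; rfl
  have hCher : C.IsHermitian := by
    have hd : (diagonal (fun i => ((s i : ℝ) : ℂ))).IsHermitian := by
      apply isHermitian_diagonal_of_self_adjoint
      funext i
      exact Complex.conj_ofReal _
    calc Cᴴ = U * (diagonal (fun i => ((s i : ℝ) : ℂ)))ᴴ * star U := by
          simp [hC, Matrix.star_eq_conjTranspose, conjTranspose_mul, mul_assoc]
      _ = C := by rw [hd.eq]
  have hCC : C * C = 1 := by
    rw [hC, sandwich_mul hUU']
    have h2 : (fun i => ((s i : ℝ) : ℂ) * ((s i : ℝ) : ℂ)) = fun _ => (1 : ℂ) := by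
      funext i
      by_cases h : lam i < 0 <;> simp [hs, h]
    rw [h2, diagonal_one, mul_one, hUU]
  have hCM : C * M = T := by
    rw [hspec, hC, sandwich_mul hUU', hT]
    have h3 : (fun i => ((s i : ℝ) : ℂ) * ((lam i : ℝ) : ℂ)) = fun i => ((|lam i| : ℝ) : ℂ) := by
      funext i
      rw [← Complex.ofReal_mul]
      by_cases h : lam i < 0
      · rw [abs_of_neg h]; simp [hs, h]
      · rw [abs_of_nonneg (not_lt.mp h)]; simp [hs, h]
    rw [h3]
  have hTpsd : T.PosSemidef := by
    have hd : (diagonal (fun i => ((|lam i| : ℝ) : ℂ))).PosSemidef := by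
      apply PosSemidef.diagonal
      exact Pi.le_def.mpr fun i => Complex.zero_le_real.mpr (abs_nonneg _)
    simpa [hT, Matrix.star_eq_conjTranspose] using hd.mul_mul_conjTranspose_same U
  have hTsq : T ^ 2 = Mᴴ * M := by
    have h4 : (fun i => ((|lam i| : ℝ) : ℂ) * ((|lam i| : ℝ) : ℂ))
        = fun i => ((lam i : ℝ) : ℂ) * ((lam i : ℝ) : ℂ) := by
      funext i
      rw [← Complex.ofReal_mul, ← Complex.ofReal_mul, abs_mul_abs_self]
    have h1 : T * T = M * M := by
      rw [hspec, hT, sandwich_mul hUU', sandwich_mul hUU', h4]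
    rw [pow_two, h1, hM.eq]
  have hTeq : T = (Matrix.posSemidef_conjTranspose_mul_self M).sqrt :=
    hTpsd.eq_sqrt_of_sq_eq _ hTsq
  exact ⟨C, hCher, hCC, by rw [hCM, traceNorm, ← hTeq]⟩

lemma eig_le_one {n : ℕ} {X : Matrix (Fin n) (Fin n) ℂ} (hX : X.PosSemidef)
    (hX1 : (1 - X).PosSemidef) (i : Fin n) : hX.1.eigenvalues i ≤ 1 := by
  set v : Fin n → ℂ := ⇑(hX.1.eigenvectorBasis i) with hv
  have hv1 : star v ⬝ᵥ v = 1 := by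
    have hnorm : ‖hX.1.eigenvectorBasis i‖ = 1 := hX.1.eigenvectorBasis.orthonormal.1 i
    have h2 : (inner ℂ (hX.1.eigenvectorBasis i) (hX.1.eigenvectorBasis i) : ℂ) = 1 := by
      rw [inner_self_eq_norm_sq_to_K, hnorm]; norm_num
    rw [← h2, PiLp.inner_apply]
    simp [dotProduct, RCLike.inner_apply, hv, mul_comm]
    refine Finset.sum_congr rfl fun x _ => ?_
    rw [Complex.mul_conj, Complex.normSq_eq_norm_sq, Complex.ofReal_pow]
  have hXv : X *ᵥ v = ((hX.1.eigenvalues i : ℝ) : ℂ) • v := by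
    rw [hv, hX.1.mulVec_eigenvectorBasis i]
    funext k
    simp [Complex.real_smul]
  have h0 := hX1.dotProduct_mulVec_nonneg v
  rw [sub_mulVec, one_mulVec, dotProduct_sub, hXv, dotProduct_smul, hv1, smul_eq_mul, mul_one]
    at h0
  have := (Complex.le_def.mp h0).1
  simp only [Complex.sub_re, Complex.one_re, Complex.ofReal_re, Complex.zero_re] at this
  linarith

lemma sandwich_psd {n : ℕ} (U : Matrix (Fin n) (Fin n) ℂ) {d : Fin n → ℝ}
    (hd : ∀ i, 0 ≤ d i) : (U * diagonal (fun i => ((d i : ℝ) : ℂ)) * star U).PosSemidef := by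
  have h : (diagonal (fun i => ((d i : ℝ) : ℂ))).PosSemidef :=
    PosSemidef.diagonal (Pi.le_def.mpr fun i => Complex.zero_le_real.mpr (hd i))
  simpa [Matrix.star_eq_conjTranspose] using h.mul_mul_conjTranspose_same U

lemma sqrt_facts {n : ℕ} {X : Matrix (Fin n) (Fin n) ℂ} (hX : X.PosSemidef)
    (hE : ∀ i, hX.1.eigenvalues i ≤ 1) :
    (1 - hX.sqrt).PosSemidef ∧ (hX.sqrt - X).PosSemidef := by
  classical
  set U : Matrix (Fin n) (Fin n) ℂ := (hX.1.eigenvectorUnitary : Matrix (Fin n) (Fin n) ℂ)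
  have hUU : U * star U = 1 := (Matrix.mem_unitaryGroup_iff).mp hX.1.eigenvectorUnitary.2
  set lam : Fin n → ℝ := hX.1.eigenvalues with hlam
  have hS : hX.sqrt = U * diagonal (fun i => ((Real.sqrt (lam i) : ℝ) : ℂ)) * star U := rfl
  have hXs : X = U * diagonal (fun i => ((lam i : ℝ) : ℂ)) * star U := by
    have := hX.1.spectral_theorem
    rw [this, Unitary.conjStarAlgAut_apply]; rfl
  have hone : (1 : Matrix (Fin n) (Fin n) ℂ)
      = U * diagonal (fun i => (((1 : ℝ) : ℝ) : ℂ)) * star U := by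
    have : diagonal (fun _ : Fin n => ((1:ℝ) : ℂ)) = (1 : Matrix (Fin n) (Fin n) ℂ) := by
      simp [diagonal_one]
    rw [this, mul_one, hUU]
  have hdiff : ∀ d e : Fin n → ℝ,
      (U * diagonal (fun i => ((d i : ℝ) : ℂ)) * star U)
        - (U * diagonal (fun i => ((e i : ℝ) : ℂ)) * star U)
      = U * diagonal (fun i => ((d i - e i : ℝ) : ℂ)) * star U := by
    intro d e
    rw [← sub_mul, ← mul_sub, diagonal_sub]
    congr 2
    funext i
    push_cast
    ring
  constructor
  · rw [hone, hS, hdiff]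
    exact sandwich_psd U fun i => by
      have := Real.sqrt_le_one.mpr (hE i)
      linarith
  · rw [hS, hXs, hdiff]
    exact sandwich_psd U fun i => by
      have h1 : lam i ≤ Real.sqrt (lam i) := by
        have h0 : 0 ≤ lam i := hX.eigenvalues_nonneg i
        nlinarith [Real.sq_sqrt h0, Real.sqrt_nonneg (lam i), hE i]
      linarith

end GentleAux

open Matrix GentleAux

/-- **The gentle (tender) operator lemma.** If `τ ≥ 0` with `tr τ ≤ 1`,
`0 ≤ X ≤ 1`, and `tr(τ X) ≥ 1 - ε`, then `‖√X τ √X - τ‖₁ ≤ 2 √ε`. -/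
theorem gentle_operator {n : ℕ} (τ X : Matrix (Fin n) (Fin n) ℂ)
    (hτ : τ.PosSemidef) (hτtr : τ.trace.re ≤ 1)
    (hX : X.PosSemidef) (hX1 : (1 - X).PosSemidef)
    (ε : ℝ) (hε : ε ∈ Set.Ioo (0 : ℝ) 1)
    (h : 1 - ε ≤ (τ * X).trace.re) :
    traceNorm (hX.sqrt * τ * hX.sqrt - τ) ≤ 2 * Real.sqrt ε := by
  classical
  obtain ⟨S, hSpsd, hSS, hS1, hSX, hgoal⟩ :
      ∃ S : Matrix (Fin n) (Fin n) ℂ, S.PosSemidef ∧ S * S = X ∧ (1 - S).PosSemidef ∧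
        (S - X).PosSemidef ∧
        traceNorm (S * τ * S - τ) = traceNorm (hX.sqrt * τ * hX.sqrt - τ) :=
    ⟨hX.sqrt, hX.posSemidef_sqrt, hX.sqrt_mul_self,
      (sqrt_facts hX (eig_le_one hX hX1)).1, (sqrt_facts hX (eig_le_one hX hX1)).2, rfl⟩
  rw [← hgoal]
  obtain ⟨R, hRpsd, hRR⟩ :
      ∃ R : Matrix (Fin n) (Fin n) ℂ, R.PosSemidef ∧ R * R = τ :=
    ⟨hτ.sqrt, hτ.posSemidef_sqrt, hτ.sqrt_mul_self⟩
  have hSh : Sᴴ = S := hSpsd.1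
  have hRh : Rᴴ = R := hRpsd.1
  have hτh : τᴴ = τ := hτ.1
  -- M and its sign matrix
  have hP : (S * τ * S).PosSemidef := by
    have := hτ.mul_mul_conjTranspose_same S
    rwa [hSh] at this
  have hMher : (S * τ * S - τ).IsHermitian := hP.1.sub hτ.1
  obtain ⟨C, hCh, hCC, hCtr⟩ := exists_sign (S * τ * S - τ) hMher
  -- key scalar quantities
  have hq0 : 0 ≤ ((S - 1) * τ * (S - 1)).trace.re := by
    have hpsd : ((S - 1) * τ * (S - 1)).PosSemidef := by
      have := hτ.mul_mul_conjTranspose_same (S - 1)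
      rwa [conjTranspose_sub, hSh, conjTranspose_one] at this
    exact psd_trace_re_nonneg hpsd
  have hτX1 : (τ * X).trace.re ≤ τ.trace.re := by
    have h0 : 0 ≤ (τ * (1 - X)).trace.re := trace_mul_re_nonneg hτ hX1
    have he : (τ * (1 - X)).trace = τ.trace - (τ * X).trace := by
      rw [mul_sub, mul_one, trace_sub]
    rw [he, Complex.sub_re] at h0
    linarith
  have hcyc : ((S - 1) * τ * (S - 1)).trace = (τ * ((S - 1) * (S - 1))).trace := by
    rw [trace_mul_comm, ← mul_assoc, trace_mul_comm]
  have hq : ((S - 1) * τ * (S - 1)).trace.re ≤ ε := by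
    have hide : τ * ((S - 1) * (S - 1)) + τ * (S - X) + τ * (S - X) = τ * (1 - X) := by
      rw [← hSS]; noncomm_ring
    have ha : 0 ≤ (τ * (S - X)).trace.re := trace_mul_re_nonneg hτ hSX
    have hb : (τ * (1 - X)).trace.re ≤ ε := by
      have he : (τ * (1 - X)).trace = τ.trace - (τ * X).trace := by
        rw [mul_sub, mul_one, trace_sub]
      rw [he, Complex.sub_re]
      linarith
    have htr := congrArg (fun M : Matrix (Fin n) (Fin n) ℂ => M.trace.re) hide
    simp only [trace_add, Complex.add_re] at htr
    rw [← hcyc] at htr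
    linarith
  -- trace of τ * X is at most 1
  have hτXle : (τ * X).trace.re ≤ 1 := le_trans hτX1 hτtr
  -- split C * M
  have hsplit : C * (S * τ * S - τ) = C * S * τ * (S - 1) + C * (S - 1) * τ := by
    noncomm_ring
  -- Term 1 : tr (C S τ (S-1))
  have hA1H : (R * S * C)ᴴ = C * S * R := by
    simp [conjTranspose_mul, hRh, hSh, hCh.eq, mul_assoc]
  have hAB1 : (R * S * C)ᴴ * (R * (S - 1)) = C * S * τ * (S - 1) := by
    rw [hA1H, ← hRR]; noncomm_ring
  have hAA1 : ((R * S * C)ᴴ * (R * S * C)).trace = (τ * X).trace := by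
    have e2 : (R * S * C)ᴴ * (R * S * C) = C * ((S * τ * S) * C) := by
      rw [hA1H, ← hRR]; noncomm_ring
    rw [e2, trace_mul_comm, mul_assoc, hCC, mul_one]
    rw [trace_mul_comm, ← mul_assoc, hSS, trace_mul_comm]
  have hBB1 : ((R * (S - 1))ᴴ * (R * (S - 1))).trace = ((S - 1) * τ * (S - 1)).trace := by
    have e3 : (R * (S - 1))ᴴ * (R * (S - 1)) = (S - 1) * τ * (S - 1) := by
      rw [conjTranspose_mul, conjTranspose_sub, hSh, conjTranspose_one, hRh, ← hRR]
      noncomm_ring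
    rw [e3]
  have ht1 : ‖(C * S * τ * (S - 1)).trace‖ ≤ Real.sqrt ε := by
    have := trace_cs (R * S * C) (R * (S - 1))
    rw [hAB1, hAA1, hBB1] at this
    refine le_trans this ?_
    calc Real.sqrt ((τ * X).trace.re) * Real.sqrt (((S - 1) * τ * (S - 1)).trace.re)
        ≤ 1 * Real.sqrt ε := by
          apply mul_le_mul (Real.sqrt_le_one.mpr hτXle) (Real.sqrt_le_sqrt hq)
            (Real.sqrt_nonneg _) zero_le_one
      _ = Real.sqrt ε := one_mul _
  -- Term 2 : tr (C (S-1) τ)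
  have hA2H : (R * (S - 1) * C)ᴴ = C * (S - 1) * R := by
    simp [conjTranspose_mul, conjTranspose_sub, conjTranspose_one, hRh, hSh, hCh.eq, mul_assoc]
  have hAB2 : (R * (S - 1) * C)ᴴ * R = C * (S - 1) * τ := by
    rw [hA2H, ← hRR]; noncomm_ring
  have hAA2 : ((R * (S - 1) * C)ᴴ * (R * (S - 1) * C)).trace
      = ((S - 1) * τ * (S - 1)).trace := by
    have e2 : (R * (S - 1) * C)ᴴ * (R * (S - 1) * C)
        = C * (((S - 1) * τ * (S - 1)) * C) := by
      rw [hA2H, ← hRR]; noncomm_ring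
    rw [e2, trace_mul_comm, mul_assoc, hCC, mul_one]
  have hBB2 : (Rᴴ * R).trace = τ.trace := by rw [hRh, hRR]
  have ht2 : ‖(C * (S - 1) * τ).trace‖ ≤ Real.sqrt ε := by
    have := trace_cs (R * (S - 1) * C) R
    rw [hAB2, hAA2, hBB2] at this
    refine le_trans this ?_
    calc Real.sqrt (((S - 1) * τ * (S - 1)).trace.re) * Real.sqrt (τ.trace.re)
        ≤ Real.sqrt ε * 1 := by
          apply mul_le_mul (Real.sqrt_le_sqrt hq) (Real.sqrt_le_one.mpr hτtr)
            (Real.sqrt_nonneg _) (Real.sqrt_nonneg _)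
      _ = Real.sqrt ε := mul_one _
  -- assemble
  rw [← hCtr, hsplit, trace_add, Complex.add_re]
  have h1 := le_trans (Complex.re_le_norm _) ht1
  have h2 := le_trans (Complex.re_le_norm _) ht2
  linarith
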